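/- Let Σ_x ∈ ℝ^{d_x×d_x} be symmetric positive definite, V ∈ ℝ^{d_y×d_x}, and D ≥ 2 an integer. When Σ_ε = I_{d_y}, the SGD sharpness formula T = (D−1)·(Tr S)^{(D−2)/D}·(Tr Σ_ε · Tr Σ_x)^{1/D}·Tr[Σ_ε^{−1} L S Lᵀ] + d_y·(Tr S)^{2(D−1)/D}·(Tr Σ_x)^{1/D}/(Tr Σ_ε)^{(D−1)/D}, evaluated with V' = Σ_ε^{1/2} V Σ_x^{1/2} = V Σ_x^{1/2} and any singular value decomposition V' = L S Rᵀ, equals the minimal sharpness D·(‖V·Σ_x^{1/2}‖_*)^{2(D−1)/D}·(d_y·Tr Σ_x)^{1/D}. -/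

import Mathlib

open Matrix

/-- The positive semidefinite square root of a positive semidefinite matrix, as
`Matrix.PosSemidef.sqrt` was defined in the older Mathlib. -/
noncomputable def posSemidefSqrt {n : Type*} [Fintype n] [DecidableEq n]
    {A : Matrix n n ℝ} (hA : A.PosSemidef) : Matrix n n ℝ :=
  hA.1.eigenvectorUnitary.1 * diagonal ((↑) ∘ (√·) ∘ hA.1.eigenvalues) *
    (star hA.1.eigenvectorUnitary : Matrix n n ℝ)

/-- The nuclear norm of a real matrix: the sum of its singular values,
i.e. `Tr((MᴴM)^{1/2})`. -/
noncomputable def nuclearNorm {m n : ℕ} (M : Matrix (Fin m) (Fin n) ℝ) : ℝ :=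
  (posSemidefSqrt (Matrix.posSemidef_conjTranspose_mul_self M)).trace

open scoped MatrixOrder in
theorem posSemidefSqrt_eq_of_sq_eq {n : Type*} [Fintype n] [DecidableEq n]
    {A B : Matrix n n ℝ} (hA : A.PosSemidef) (hB : B.PosSemidef) (h : B ^ 2 = A) :
    B = posSemidefSqrt hA := by
  have e : posSemidefSqrt hA = CFC.sqrt A := by
    rw [CFC.sqrt_eq_cfc, cfc_nnreal_eq_real _ A, hA.1.cfc_eq]
    simp only [IsHermitian.cfc, Unitary.conjStarAlgAut_apply, posSemidefSqrt]
    congr 2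
    ext i j
    rw [diagonal_apply, diagonal_apply]
    split_ifs <;> simp [max_eq_left (hA.eigenvalues_nonneg _)]
  rw [e]
  exact (CFC.sqrt_unique (by rw [← sq]; exact h) hB.nonneg).symm

/-- Corollary 2 ('if' direction): under isotropic label noise `Σ_ε = I`, the SGD
sharpness formula
`(D−1)·(Tr S)^{(D−2)/D}·(Tr Σ_ε · Tr Σ_x)^{1/D}·Tr[Σ_ε^{−1} L S Lᵀ]
  + d_y·(Tr S)^{2(D−1)/D}·(Tr Σ_x)^{1/D}/(Tr Σ_ε)^{(D−1)/D}`,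
evaluated with `V' = V Σ_x^{1/2} = L S Rᵀ` an SVD, equals the minimal sharpness
`D·‖V Σ_x^{1/2}‖_*^{2(D−1)/D}·(d_y · Tr Σ_x)^{1/D}`. -/
theorem sgd_sharpness_isotropic_eq_min {dx dy dd : ℕ} (D : ℕ) (hD : 2 ≤ D)
    (Sx : Matrix (Fin dx) (Fin dx) ℝ) (hSx : Sx.PosDef)
    (V : Matrix (Fin dy) (Fin dx) ℝ)
    (L : Matrix (Fin dy) (Fin dd) ℝ) (R : Matrix (Fin dx) (Fin dd) ℝ)
    (S : Matrix (Fin dd) (Fin dd) ℝ)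
    (hSdiag : ∀ i j, i ≠ j → S i j = 0) (hSnonneg : ∀ i, 0 ≤ S i i)
    (hSVD : V * posSemidefSqrt hSx.posSemidef = L * S * Rᵀ)
    (hL : Lᵀ * L = 1) (hR : Rᵀ * R = 1) :
    ((D : ℝ) - 1) * S.trace ^ (((D : ℝ) - 2) / D)
        * ((1 : Matrix (Fin dy) (Fin dy) ℝ).trace * Sx.trace) ^ ((1 : ℝ) / D)
        * ((1 : Matrix (Fin dy) (Fin dy) ℝ)⁻¹ * (L * S * Lᵀ)).trace
      + (dy : ℝ) * S.trace ^ (2 * ((D : ℝ) - 1) / D) * Sx.trace ^ ((1 : ℝ) / D)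
        / ((1 : Matrix (Fin dy) (Fin dy) ℝ).trace) ^ (((D : ℝ) - 1) / D)
    = (D : ℝ) * nuclearNorm (V * posSemidefSqrt hSx.posSemidef) ^ (2 * ((D : ℝ) - 1) / D)
        * ((dy : ℝ) * Sx.trace) ^ ((1 : ℝ) / D) := by
  -- S is diagonal
  have hSd : S = Matrix.diagonal (fun i => S i i) := by
    ext i j
    rcases eq_or_ne i j with h | h
    · subst h; simp
    · rw [Matrix.diagonal_apply_ne _ h, hSdiag i j h]
  have hSps : S.PosSemidef := by
    rw [hSd]; exact Matrix.posSemidef_diagonal_iff.mpr hSnonneg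
  have hSt : Sᵀ = S := by rw [hSd, Matrix.diagonal_transpose]
  -- helpers for associativity
  have hR' : ∀ {p : ℕ} (X : Matrix (Fin dd) (Fin p) ℝ), Rᵀ * (R * X) = X := by
    intro p X; rw [← Matrix.mul_assoc, hR, Matrix.one_mul]
  have hL' : ∀ {p : ℕ} (X : Matrix (Fin dd) (Fin p) ℝ), Lᵀ * (L * X) = X := by
    intro p X; rw [← Matrix.mul_assoc, hL, Matrix.one_mul]
  -- R S Rᵀ is the sqrt of (V√Sx)ᴴ(V√Sx)
  have hB : (R * S * Rᵀ).PosSemidef := by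
    have := hSps.mul_mul_conjTranspose_same R
    rwa [Matrix.conjTranspose_eq_transpose_of_trivial] at this
  have hsq : (R * S * Rᵀ) ^ 2 = (V * posSemidefSqrt hSx.posSemidef)ᴴ * (V * posSemidefSqrt hSx.posSemidef) := by
    rw [hSVD, Matrix.conjTranspose_eq_transpose_of_trivial]
    simp only [pow_two, Matrix.transpose_mul, Matrix.transpose_transpose, hSt,
      Matrix.mul_assoc, hR', hL']
  have hsqrt : R * S * Rᵀ = posSemidefSqrt (Matrix.posSemidef_conjTranspose_mul_self
      (V * posSemidefSqrt hSx.posSemidef)) :=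
    posSemidefSqrt_eq_of_sq_eq _ hB hsq
  have hnn : nuclearNorm (V * posSemidefSqrt hSx.posSemidef) = S.trace := by
    rw [nuclearNorm, ← hsqrt, Matrix.trace_mul_cycle, hR, Matrix.one_mul]
  have htrL : (L * S * Lᵀ).trace = S.trace := by
    rw [Matrix.trace_mul_cycle, hL, Matrix.one_mul]
  -- nonnegativity
  have ht : 0 ≤ S.trace := by
    rw [Matrix.trace]; exact Finset.sum_nonneg fun i _ => hSnonneg i
  have hc : 0 ≤ Sx.trace := by
    rw [Matrix.trace]
    refine Finset.sum_nonneg fun i _ => ?_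
    have := hSx.posSemidef.2 (Finsupp.single i 1)
    simpa using this
  have hdy : (0 : ℝ) ≤ (dy : ℝ) := Nat.cast_nonneg _
  have hDpos : (0 : ℝ) < D := by positivity
  have hD2 : (2 : ℝ) ≤ (D : ℝ) := by exact_mod_cast hD
  rw [hnn, inv_one, Matrix.one_mul, htrL, Matrix.trace_one]
  simp only [Fintype.card_fin]
  set t := S.trace
  set c := Sx.trace
  have hE : (0 : ℝ) < 2 * ((D : ℝ) - 1) / D := div_pos (by nlinarith) hDpos
  have e1 : t ^ (((D : ℝ) - 2) / D) * t = t ^ (2 * ((D : ℝ) - 1) / D) := by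
    have h1 : ((D : ℝ) - 2) / D + 1 = 2 * ((D : ℝ) - 1) / D := by
      field_simp; ring
    rw [← h1, Real.rpow_add' ht (by rw [h1]; exact ne_of_gt hE), Real.rpow_one]
  have e2 : ((dy : ℝ)) ^ ((1 : ℝ) / D) = (dy : ℝ) / (dy : ℝ) ^ (((D : ℝ) - 1) / D) := by
    have h1 : (1 : ℝ) - ((D : ℝ) - 1) / D = 1 / D := by field_simp; ring
    rw [show ((1:ℝ)/D) = (1:ℝ) - ((D:ℝ)-1)/D from h1.symm,
      Real.rpow_sub' hdy (by rw [h1]; positivity), Real.rpow_one]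
  have e3 : ((dy : ℝ) * c) ^ ((1 : ℝ) / D) = (dy : ℝ) ^ ((1 : ℝ) / D) * c ^ ((1 : ℝ) / D) :=
    Real.mul_rpow hdy hc
  rw [e3]
  linear_combination ((D:ℝ) - 1) * (dy:ℝ) ^ ((1:ℝ)/D) * c ^ ((1:ℝ)/D) * e1
    - t ^ (2 * ((D:ℝ) - 1) / D) * c ^ ((1:ℝ)/D) * e2
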